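/- The definite integral ∫_{-1/2}^{1/2} (arcsin((1-2x)/√5) + arcsin((1+2x)/√5)) dx equals 2·arctan(1/3) + π/2 + 1 - √5. -/

import Mathlib

open Real intervalIntegral

noncomputable def A (u : ℝ) : ℝ := u * Real.arcsin (u / Real.sqrt 5) + Real.sqrt (5 - u ^ 2)

lemma hasDerivAt_A {u : ℝ} (hu : u ^ 2 < 5) :
    HasDerivAt A (Real.arcsin (u / Real.sqrt 5)) u := by
  have h5 : (0:ℝ) < Real.sqrt 5 := Real.sqrt_pos.mpr (by norm_num)
  have h5sq : Real.sqrt 5 ^ 2 = 5 := Real.sq_sqrt (by norm_num)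
  have habs : |u| < Real.sqrt 5 := by
    have := Real.sqrt_lt_sqrt (sq_nonneg u) hu
    rwa [Real.sqrt_sq_eq_abs] at this
  have hpos : 0 < 5 - u ^ 2 := by linarith
  have hsqpos : 0 < Real.sqrt (5 - u ^ 2) := Real.sqrt_pos.mpr hpos
  have hlt : |u / Real.sqrt 5| < 1 := by
    rw [abs_div, abs_of_pos h5, div_lt_one h5]; exact habs
  have h1 : u / Real.sqrt 5 ≠ -1 := by
    intro h; rw [h] at hlt; norm_num at hlt
  have h2 : u / Real.sqrt 5 ≠ 1 := by
    intro h; rw [h] at hlt; norm_num at hlt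
  have hd1 : HasDerivAt (fun u : ℝ => Real.arcsin (u / Real.sqrt 5))
      (1 / Real.sqrt (1 - (u / Real.sqrt 5) ^ 2) * (1 / Real.sqrt 5)) u :=
    (Real.hasDerivAt_arcsin h1 h2).comp (h := fun u : ℝ => u / Real.sqrt 5) u ((hasDerivAt_id u).div_const _)
  have hd2 : HasDerivAt (fun u : ℝ => u * Real.arcsin (u / Real.sqrt 5))
      (1 * Real.arcsin (u / Real.sqrt 5) +
        u * (1 / Real.sqrt (1 - (u / Real.sqrt 5) ^ 2) * (1 / Real.sqrt 5))) u :=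
    (hasDerivAt_id u).mul hd1
  have hd3 : HasDerivAt (fun u : ℝ => 5 - u ^ 2) (-(↑2 * u ^ 1)) u :=
    (hasDerivAt_pow 2 u).const_sub 5
  have hd4 : HasDerivAt (fun u : ℝ => Real.sqrt (5 - u ^ 2))
      (1 / (2 * Real.sqrt (5 - u ^ 2)) * -(↑2 * u ^ 1)) u :=
    (Real.hasDerivAt_sqrt (ne_of_gt hpos)).comp u hd3
  have key : Real.sqrt (1 - (u / Real.sqrt 5) ^ 2) = Real.sqrt (5 - u ^ 2) / Real.sqrt 5 := by
    rw [← Real.sqrt_div (by positivity : (0:ℝ) ≤ 5 - u ^ 2) 5]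
    congr 1
    rw [div_pow, h5sq]
    field_simp
  have := hd2.add hd4
  refine this.congr_deriv ?_
  symm
  rw [key]
  field_simp
  ring

theorem integral_sum :
    ∫ x in (-(1:ℝ)/2)..(1/2),
        (Real.arcsin ((1 - 2*x) / Real.sqrt 5) + Real.arcsin ((1 + 2*x) / Real.sqrt 5))
      = 2 * Real.arctan (1/3) + Real.pi / 2 + 1 - Real.sqrt 5 := by
  have hmain : ∫ x in (-(1:ℝ)/2)..(1/2),
      (Real.arcsin ((1 - 2*x) / Real.sqrt 5) + Real.arcsin ((1 + 2*x) / Real.sqrt 5))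
      = (A (1 + 2*(1/2:ℝ)) - A (1 - 2*(1/2:ℝ)))/2 - (A (1 + 2*(-(1:ℝ)/2)) - A (1 - 2*(-(1:ℝ)/2)))/2 := by
    apply intervalIntegral.integral_eq_sub_of_hasDerivAt (f := fun x : ℝ => (A (1 + 2*x) - A (1 - 2*x))/2)
    · intro x hx
      rw [Set.uIcc_of_le (by norm_num), Set.mem_Icc] at hx
      have hp : (1 + 2*x) ^ 2 < 5 := by nlinarith [hx.1, hx.2]
      have hm : (1 - 2*x) ^ 2 < 5 := by nlinarith [hx.1, hx.2]
      have d1 : HasDerivAt (fun x : ℝ => 1 + 2*x) 2 x := by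
        simpa using ((hasDerivAt_id x).const_mul 2).const_add 1
      have d2 : HasDerivAt (fun x : ℝ => 1 - 2*x) (-2) x := by
        simpa using ((hasDerivAt_id x).const_mul 2).const_sub 1
      have D1 : HasDerivAt (fun x : ℝ => A (1 + 2*x))
          (Real.arcsin ((1 + 2*x) / Real.sqrt 5) * 2) x := (hasDerivAt_A hp).comp (h₂ := A) x d1
      have D2 : HasDerivAt (fun x : ℝ => A (1 - 2*x))
          (Real.arcsin ((1 - 2*x) / Real.sqrt 5) * (-2)) x := (hasDerivAt_A hm).comp (h₂ := A) x d2
      have := (D1.sub D2).div_const 2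
      refine this.congr_deriv ?_
      ring
    · apply Continuous.intervalIntegrable
      exact (Real.continuous_arcsin.comp ((continuous_const.sub (continuous_const.mul continuous_id)).div_const _)).add
        (Real.continuous_arcsin.comp ((continuous_const.add (continuous_const.mul continuous_id)).div_const _))
  rw [hmain]
  have hA2 : A 2 = 2 * Real.arcsin (2 / Real.sqrt 5) + 1 := by
    simp [A]
    norm_num
  have hA0 : A 0 = Real.sqrt 5 := by simp [A]
  have harcsin : Real.arcsin (2 / Real.sqrt 5) = Real.arctan (1/3) + Real.pi/4 := by
    have h1 : Real.arctan 2 = Real.arcsin (2 / Real.sqrt 5) := by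
      rw [Real.arctan_eq_arcsin]
      norm_num
    have h2 : Real.arctan (1/3) + Real.arctan 1 = Real.arctan 2 := by
      rw [Real.arctan_add (by norm_num)]
      norm_num
    rw [← h1, ← h2, Real.arctan_one]
  norm_num [hA2, hA0, harcsin]
  ring
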